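/- Let u, v be vectors in R^n with strictly positive entries, and let α = Σ u_k, β = Σ v_k. Then the normalized vectors π(u) = u/α and π(v) = v/β satisfy ‖π(u) − π(v)‖₁ ≤ (4/(α+β))·‖u − v‖₁. -/

import Mathlib

lemma aux0 (n : ℕ) (hn : 0 < n) (u v : Fin n → ℝ) (hu : ∀ k, 0 < u k) (hv : ∀ k, 0 < v k)
    (α β : ℝ) (hα : α = ∑ k, u k) (hβ : β = ∑ k, v k) (hab : α ≤ β) :
    ∑ k, |u k / α - v k / β| ≤ (4 / (α + β)) * ∑ k, |u k - v k| := by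
  have hαpos : 0 < α := by
    rw [hα]; exact Finset.sum_pos (fun k _ => hu k) (by simp [Finset.univ_nonempty_iff, Fin.pos_iff_nonempty.mp hn])
  have hβpos : 0 < β := lt_of_lt_of_le hαpos hab
  set S := ∑ k, |u k - v k| with hS
  have hSnn : 0 ≤ S := Finset.sum_nonneg fun k _ => abs_nonneg _
  have hinv : 1/β ≤ 1/α := one_div_le_one_div_of_le hαpos hab
  have step1 : ∀ k, |u k / α - v k / β| ≤ u k * (1/α - 1/β) + |u k - v k| / β := by
    intro k
    have h1 : u k / α - v k / β = u k * (1/α - 1/β) + (u k - v k) / β := by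
      field_simp; ring
    rw [h1]
    calc |u k * (1/α - 1/β) + (u k - v k) / β|
        ≤ |u k * (1/α - 1/β)| + |(u k - v k) / β| := abs_add_le _ _
      _ = u k * (1/α - 1/β) + |u k - v k| / β := by
          rw [abs_div, abs_of_pos hβpos, abs_of_nonneg]
          exact mul_nonneg (hu k).le (by linarith)
  have step2 : ∑ k, |u k / α - v k / β| ≤ α * (1/α - 1/β) + S / β := by
    calc ∑ k, |u k / α - v k / β| ≤ ∑ k, (u k * (1/α - 1/β) + |u k - v k| / β) :=
          Finset.sum_le_sum fun k _ => step1 k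
      _ = (∑ k, u k) * (1/α - 1/β) + (∑ k, |u k - v k|) / β := by
          rw [Finset.sum_add_distrib, ← Finset.sum_mul, ← Finset.sum_div]
      _ = α * (1/α - 1/β) + S / β := by rw [← hα]
  have hba : β - α ≤ S := by
    have : β - α = ∑ k, (v k - u k) := by rw [hα, hβ, Finset.sum_sub_distrib]
    calc β - α ≤ |∑ k, (v k - u k)| := this ▸ le_abs_self _
      _ ≤ ∑ k, |v k - u k| := Finset.abs_sum_le_sum_abs _ _
      _ = S := by simp [hS, abs_sub_comm]
  have step3 : α * (1/α - 1/β) + S / β ≤ 2 * S / β := by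
    have : α * (1/α - 1/β) = (β - α) / β := by field_simp
    rw [this]
    have h4 : (β - α) / β ≤ S / β := by
      apply div_le_div_of_nonneg_right hba hβpos.le
    have : 2 * S / β = S / β + S / β := by ring
    linarith
  have step4 : 2 * S / β ≤ (4 / (α + β)) * S := by
    have h5 : 2 / β ≤ 4 / (α + β) := by
      rw [div_le_div_iff₀ hβpos (by linarith)]
      nlinarith
    calc 2 * S / β = (2 / β) * S := by ring
      _ ≤ (4 / (α + β)) * S := mul_le_mul_of_nonneg_right h5 hSnn
  linarith

theorem stmt0 (n : ℕ) (u v : Fin n → ℝ) (hu : ∀ k, 0 < u k) (hv : ∀ k, 0 < v k)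
    (α β : ℝ) (hα : α = ∑ k, u k) (hβ : β = ∑ k, v k) :
    ∑ k, |u k / α - v k / β| ≤ (4 / (α + β)) * ∑ k, |u k - v k| := by
  rcases Nat.eq_zero_or_pos n with hn | hn
  · subst hn; simp
  rcases le_total α β with hab | hab
  · exact aux0 n hn u v hu hv α β hα hβ hab
  · have := aux0 n hn v u hv hu β α hβ hα hab
    calc ∑ k, |u k / α - v k / β| = ∑ k, |v k / β - u k / α| := by
          simp [abs_sub_comm]
      _ ≤ (4 / (β + α)) * ∑ k, |v k - u k| := this
      _ = (4 / (α + β)) * ∑ k, |u k - v k| := by rw [add_comm]; simp [abs_sub_comm]
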